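/- Let (T⊕, T⊗) be a latin bitrade on finite sets A₁, A₂, A₃, and let τ₁, τ₂, τ₃ be the associated permutations of T⊕. Then for all i ≠ j in {1,2,3}, any cycle of τᵢ and any cycle of τⱼ have at most one common point; equivalently, if a and b are distinct elements of T⊕ lying in the same orbit of τᵢ and also in the same orbit of τⱼ with i ≠ j, this is impossible. -/

import Mathlib

/-- `agreeCoord r a b` says the triples `a` and `b` agree in coordinate `r`. -/
def agreeCoord {A₁ A₂ A₃ : Type*} (r : Fin 3) (a b : A₁ × A₂ × A₃) : Prop :=
  ![a.1 = b.1, a.2.1 = b.2.1, a.2.2 = b.2.2] r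

/-- A partial latin square: any two triples agreeing in two coordinates are equal. -/
def IsPLS {A₁ A₂ A₃ : Type*} (T : Set (A₁ × A₂ × A₃)) : Prop :=
  ∀ a ∈ T, ∀ b ∈ T, ∀ r s : Fin 3, r ≠ s →
    agreeCoord r a b → agreeCoord s a b → a = b

/-- A latin bitrade `(Tp, Tm)`: two disjoint partial latin squares such that for each
triple of one and each pair of coordinates there is a unique triple of the other
agreeing with it in those two coordinates. -/
structure IsBitrade {A₁ A₂ A₃ : Type*} (Tp Tm : Set (A₁ × A₂ × A₃)) : Prop where
  pls_left : IsPLS Tp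
  pls_right : IsPLS Tm
  disj : Tp ∩ Tm = ∅
  r2 : ∀ a ∈ Tp, ∀ r s : Fin 3, r ≠ s →
    ∃! b, b ∈ Tm ∧ agreeCoord r a b ∧ agreeCoord s a b
  r3 : ∀ a ∈ Tm, ∀ r s : Fin 3, r ≠ s →
    ∃! b, b ∈ Tp ∧ agreeCoord r a b ∧ agreeCoord s a b

/-- `IsBetaMap r β` says that the bijection `β : Tm ≃ Tp` sends each triple of `Tm`
to a triple of `Tp` agreeing with it in the two coordinates other than `r`
(this characterizes the bijection `β_r`). -/
lemma agree_symm {A₁ A₂ A₃ : Type*} {r : Fin 3} {a b : A₁ × A₂ × A₃}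
    (hab : agreeCoord r a b) : agreeCoord r b a := by
  fin_cases r <;> simp_all [agreeCoord]

lemma agree_trans {A₁ A₂ A₃ : Type*} {r : Fin 3} {a b c : A₁ × A₂ × A₃}
    (hab : agreeCoord r a b) (hbc : agreeCoord r b c) : agreeCoord r a c := by
  fin_cases r <;> simp_all [agreeCoord]

lemma agree_rfl {A₁ A₂ A₃ : Type*} (r : Fin 3) (a : A₁ × A₂ × A₃) :
    agreeCoord r a a := by
  fin_cases r <;> simp [agreeCoord]

lemma rel_zpow {α : Type*} (σ : Equiv.Perm α) (R : α → α → Prop)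
    (hsymm : ∀ {a b}, R a b → R b a) (htrans : ∀ {a b c}, R a b → R b c → R a c)
    (hrefl : ∀ a, R a a) (hstep : ∀ a, R a (σ a)) :
    ∀ (n : ℤ) (a : α), R a ((σ ^ n) a) := by
  intro n
  induction n using Int.induction_on with
  | zero => intro a; simpa using hrefl a
  | succ n ih =>
    intro a
    have e : (σ ^ ((n : ℤ) + 1)) a = (σ ^ (n : ℤ)) (σ a) := by
      rw [zpow_add_one]; rfl
    rw [e]
    exact htrans (hstep a) (ih (σ a))
  | pred n ih =>
    intro a
    have e : (σ ^ (-(n : ℤ) - 1)) a = (σ ^ (-(n : ℤ))) (σ⁻¹ a) := by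
      rw [zpow_sub_one]; rfl
    have hinv : R a (σ⁻¹ a) := by
      have := hstep (σ⁻¹ a)
      rw [show σ (σ⁻¹ a) = a from σ.apply_symm_apply a] at this
      exact hsymm this
    rw [e]
    exact htrans hinv (ih (σ⁻¹ a))

def IsBetaMap {A₁ A₂ A₃ : Type*} {Tp Tm : Set (A₁ × A₂ × A₃)}
    (r : Fin 3) (β : Tm ≃ Tp) : Prop :=
  ∀ x : Tm, ∀ s : Fin 3, s ≠ r → agreeCoord s x.val (β x).val

/-- For `i ≠ j`, a cycle of `τᵢ` and a cycle of `τⱼ` meet in at most one point: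
distinct elements of `Tp` cannot lie in a common orbit of `τᵢ` and in a common
orbit of `τⱼ`. -/
theorem tau_cycles_intersect_in_at_most_one_point
    {A₁ A₂ A₃ : Type*} [Finite A₁] [Finite A₂] [Finite A₃]
    (Tp Tm : Set (A₁ × A₂ × A₃)) (h : IsBitrade Tp Tm)
    (β : Fin 3 → (Tm ≃ Tp)) (hβ : ∀ r : Fin 3, IsBetaMap r (β r))
    (τ : Fin 3 → Equiv.Perm Tp)
    (hτ1 : τ 0 = (β 1).symm.trans (β 2))
    (hτ2 : τ 1 = (β 2).symm.trans (β 0))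
    (hτ3 : τ 2 = (β 0).symm.trans (β 1)) :
    ∀ i j : Fin 3, i ≠ j → ∀ a b : Tp,
      (τ i).SameCycle a b → (τ j).SameCycle a b → a = b := by
  intro i j hij a b hi hj
  have key : ∀ k : Fin 3, ∀ x : Tp, agreeCoord k x.val ((τ k) x).val := by
    intro k x
    fin_cases k
    · have h1 := hβ 1 ((β 1).symm x) 0 (by decide)
      have h2 := hβ 2 ((β 1).symm x) 0 (by decide)
      rw [Equiv.apply_symm_apply] at h1
      show agreeCoord 0 x.val ((τ 0) x).val
      have e : (τ 0) x = (β 2) ((β 1).symm x) := by rw [hτ1]; rfl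
      rw [e]
      exact agree_trans (agree_symm h1) h2
    · have h1 := hβ 2 ((β 2).symm x) 1 (by decide)
      have h2 := hβ 0 ((β 2).symm x) 1 (by decide)
      rw [Equiv.apply_symm_apply] at h1
      show agreeCoord 1 x.val ((τ 1) x).val
      have e : (τ 1) x = (β 0) ((β 2).symm x) := by rw [hτ2]; rfl
      rw [e]
      exact agree_trans (agree_symm h1) h2
    · have h1 := hβ 0 ((β 0).symm x) 2 (by decide)
      have h2 := hβ 1 ((β 0).symm x) 2 (by decide)
      rw [Equiv.apply_symm_apply] at h1
      show agreeCoord 2 x.val ((τ 2) x).val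
      have e : (τ 2) x = (β 1) ((β 0).symm x) := by rw [hτ3]; rfl
      rw [e]
      exact agree_trans (agree_symm h1) h2
  have orbit : ∀ k : Fin 3, ∀ x y : Tp, (τ k).SameCycle x y →
      agreeCoord k x.val y.val := by
    rintro k x y ⟨n, hn⟩
    have := rel_zpow (τ k) (fun u v : Tp => agreeCoord k u.val v.val)
      (fun hab => agree_symm hab) (fun hab hbc => agree_trans hab hbc)
      (fun u => agree_rfl k u.val) (key k) n x
    rwa [hn] at this
  exact Subtype.ext (h.pls_left a.val a.property b.val b.property i j hij
    (orbit i a b hi) (orbit j a b hj))
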